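/- Fix n ≥ 1, x₀ ∈ ℝ^{k₀}, differentiable maps h_i : ℝ^{k_{i−1}} × ℝ^m → ℝ^{k_i}, differentiable strictly positive functions q_i : ℝ^{k_{i−1}} × ℝ^m → (0,∞), and a differentiable f : ℝ^{k₁} × ⋯ × ℝ^{k_n} → ℝ. Define x_i(θ) = h_i(x_{i−1}(θ), θ) recursively, L(θ) = ∏_{i=1}^n q_i(x_{i−1}(θ), θ), and adjoint row vectors λ_n^T = ∂f/∂x_n, λ_{i−1}^T = ∂f/∂x_{i−1} + λ_i^T ∂h_i/∂x_{i−1} + f(x₁(θ),…,x_n(θ)) · ∂(log q_i)/∂x_{i−1} for i = n,…,2 (derivatives of f evaluated at (x₁(θ),…,x_n(θ)), those of h_i and q_i at (x_{i−1}(θ), θ)). Define ĝ(θ)^T = Σ_{i=1}^n [ f(x₁(θ),…,x_n(θ)) · ∂(log q_i)/∂θ + λ_i^T ∂h_i/∂θ ]. Then the gradient of θ ↦ f(x₁(θ),…,x_n(θ)) · L(θ) equals ĝ(θ)^T · L(θ). -/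

import Mathlib

open scoped BigOperators

noncomputable section

lemma comp_prod_id_split {W E F : Type*} [NormedAddCommGroup W] [NormedSpace ℝ W]
    [NormedAddCommGroup E] [NormedSpace ℝ E] [NormedAddCommGroup F] [NormedSpace ℝ F]
    (A : E × W →L[ℝ] F) (P : W →L[ℝ] E) :
    A.comp (P.prod (ContinuousLinearMap.id ℝ W))
      = (A.comp (ContinuousLinearMap.inl ℝ E W)).comp P
        + A.comp (ContinuousLinearMap.inr ℝ E W) := by
  ext w
  simp only [ContinuousLinearMap.comp_apply, ContinuousLinearMap.prod_apply,
    ContinuousLinearMap.add_apply, ContinuousLinearMap.id_apply,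
    ContinuousLinearMap.inl_apply, ContinuousLinearMap.inr_apply]
  rw [← map_add]
  simp

lemma adjoint_telescope {W : Type*} [NormedAddCommGroup W] [NormedSpace ℝ W]
    {E : ℕ → Type*} [∀ i, NormedAddCommGroup (E i)] [∀ i, NormedSpace ℝ (E i)]
    (n : ℕ) (hn : 1 ≤ n)
    (D : (i : ℕ) → W →L[ℝ] E i)
    (Ax : (i : ℕ) → E i →L[ℝ] E (i + 1))
    (B : (i : ℕ) → W →L[ℝ] E (i + 1))
    (c lam : (i : ℕ) → E (i + 1) →L[ℝ] ℝ)
    (s : (i : ℕ) → E i →L[ℝ] ℝ)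
    (hD0 : D 0 = 0)
    (hDs : ∀ i, D (i + 1) = (Ax i).comp (D i) + B i)
    (htop : lam (n - 1) = c (n - 1))
    (hrec : ∀ j, j + 1 < n → lam j = c j + (lam (j + 1)).comp (Ax (j + 1)) + s (j + 1)) :
    ∑ j ∈ Finset.range n, (lam j).comp (B j)
      = ∑ j ∈ Finset.range n, (c j).comp (D (j + 1))
        + ∑ j ∈ Finset.range n, (s j).comp (D j) := by
  obtain ⟨N, rfl⟩ : ∃ N, n = N + 1 := ⟨n - 1, by omega⟩
  have htop' : lam N = c N := by simpa using htop
  have key : ∀ M, M ≤ N → ∑ j ∈ Finset.range M, (lam j).comp (B j)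
      = (lam M).comp ((Ax M).comp (D M))
        + ∑ j ∈ Finset.range M, (c j).comp (D (j + 1))
        + ∑ j ∈ Finset.range (M + 1), (s j).comp (D j) := by
    intro M
    induction M with
    | zero => intro _; simp [hD0]
    | succ M ih =>
      intro hM
      have hrecM : lam M = c M + (lam (M + 1)).comp (Ax (M + 1)) + s (M + 1) :=
        hrec M (by omega)
      rw [Finset.sum_range_succ, ih (by omega),
        Finset.sum_range_succ (fun j => (c j).comp (D (j + 1))),
        Finset.sum_range_succ (fun j => (s j).comp (D j)) (M + 1),
        hrecM, hDs M]
      simp only [ContinuousLinearMap.add_comp, ContinuousLinearMap.comp_add,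
        ContinuousLinearMap.comp_assoc]
      abel
  rw [Finset.sum_range_succ, key N le_rfl, htop',
    Finset.sum_range_succ (fun j => (c j).comp (D (j + 1))), hDs N]
  simp only [ContinuousLinearMap.comp_add]
  abel

set_option maxHeartbeats 1600000 in
/-- **Pointwise identity underlying the mixed pathwise/score-function gradient estimator
(Theorem 1.1).**  States `x_i(θ)` are defined recursively by `x_i = h_i(x_{i-1}, θ)`;
`q i` (the paper's `q_{i+1}`, playing the role of the conditional density evaluated at the
sampled point) is strictly positive and differentiable; `L(θ) = ∏_{i=1}^n q_i(x_{i-1}(θ), θ)`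
is the likelihood; `lam j` is the adjoint variable `λ_{j+1}` defined by
`λ_n^T = ∂f/∂x_n` and
`λ_{i-1}^T = ∂f/∂x_{i-1} + λ_i^T ∂h_i/∂x_{i-1} + f(x₁(θ),…,x_n(θ))·∂(log q_i)/∂x_{i-1}`;
and `ghat θ` is the estimator
`ĝ(θ)^T = ∑_{i=1}^n [ f(x₁(θ),…,x_n(θ))·∂(log q_i)/∂θ + λ_i^T ∂h_i/∂θ ]`.
Conclusion: the gradient of `θ ↦ f(x₁(θ),…,x_n(θ))·L(θ)` equals `ĝ(θ)^T·L(θ)`. -/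
theorem stmt_1
    (n m : ℕ) (hn : 1 ≤ n) (k : ℕ → ℕ)
    (x₀ : EuclideanSpace ℝ (Fin (k 0)))
    (h : (i : ℕ) → EuclideanSpace ℝ (Fin (k i)) × EuclideanSpace ℝ (Fin m) →
      EuclideanSpace ℝ (Fin (k (i + 1))))
    (f : ((j : Fin n) → EuclideanSpace ℝ (Fin (k (j.1 + 1)))) → ℝ)
    (q : (i : ℕ) → EuclideanSpace ℝ (Fin (k i)) × EuclideanSpace ℝ (Fin m) → ℝ)
    (hh : ∀ i, Differentiable ℝ (h i))
    (hf : Differentiable ℝ f)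
    (hq_pos : ∀ i v, 0 < q i v)
    (hq : ∀ i, Differentiable ℝ (q i))
    (x : (i : ℕ) → EuclideanSpace ℝ (Fin m) → EuclideanSpace ℝ (Fin (k i)))
    (hx0 : ∀ θ, x 0 θ = x₀)
    (hxs : ∀ i θ, x (i + 1) θ = h i (x i θ, θ))
    (X : EuclideanSpace ℝ (Fin m) → (j : Fin n) → EuclideanSpace ℝ (Fin (k (j.1 + 1))))
    (hX : ∀ θ j, X θ j = x (j.1 + 1) θ)
    (L : EuclideanSpace ℝ (Fin m) → ℝ)
    (hL : ∀ θ, L θ = ∏ j : Fin n, q j.1 (x j.1 θ, θ))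
    (lam : (j : ℕ) → EuclideanSpace ℝ (Fin m) →
      (EuclideanSpace ℝ (Fin (k (j + 1))) →L[ℝ] ℝ))
    (hlam_top : ∀ θ, lam (n - 1) θ =
      fderiv ℝ (fun v => f (Function.update (X θ) ⟨n - 1, by omega⟩ v))
        (X θ ⟨n - 1, by omega⟩))
    (hlam_rec : ∀ θ (j : ℕ) (hj : j + 1 < n), lam j θ =
      fderiv ℝ (fun v => f (Function.update (X θ) ⟨j, by omega⟩ v)) (X θ ⟨j, by omega⟩)
      + (lam (j + 1) θ).comp
          ((fderiv ℝ (h (j + 1)) (x (j + 1) θ, θ)).comp (ContinuousLinearMap.inl ℝ _ _))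
      + f (X θ) • ((fderiv ℝ (fun v => Real.log (q (j + 1) v)) (x (j + 1) θ, θ)).comp
          (ContinuousLinearMap.inl ℝ _ _)))
    (ghat : EuclideanSpace ℝ (Fin m) → (EuclideanSpace ℝ (Fin m) →L[ℝ] ℝ))
    (hghat : ∀ θ, ghat θ = ∑ j : Fin n,
      (f (X θ) • ((fderiv ℝ (fun v => Real.log (q j.1 v)) (x j.1 θ, θ)).comp
          (ContinuousLinearMap.inr ℝ _ _))
        + (lam j.1 θ).comp
            ((fderiv ℝ (h j.1) (x j.1 θ, θ)).comp (ContinuousLinearMap.inr ℝ _ _)))) :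
    ∀ θ, HasFDerivAt (fun θ' => f (X θ') * L θ') (L θ • ghat θ) θ := by
  intro θ
  -- basic notation-level facts about x
  have hxfun0 : x 0 = fun _ => x₀ := funext hx0
  have hxfunS : ∀ i, x (i + 1) = fun θ' => h i (x i θ', θ') := fun i => funext (hxs i)
  have hxd : ∀ i, Differentiable ℝ (x i) := by
    intro i
    induction i with
    | zero => rw [hxfun0]; exact differentiable_const _
    | succ i ih =>
      rw [hxfunS i]
      exact (hh i).comp (ih.prodMk differentiable_id)
  have hprod : ∀ i, HasFDerivAt (fun θ' => (x i θ', θ'))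
      ((fderiv ℝ (x i) θ).prod (ContinuousLinearMap.id ℝ _)) θ :=
    fun i => HasFDerivAt.prodMk ((hxd i θ).hasFDerivAt) (hasFDerivAt_id θ)
  have hDx : ∀ i, HasFDerivAt (x (i + 1))
      ((fderiv ℝ (h i) (x i θ, θ)).comp
        ((fderiv ℝ (x i) θ).prod (ContinuousLinearMap.id ℝ _))) θ := by
    intro i
    rw [hxfunS i]
    have hco := HasFDerivAt.comp (f := fun θ' => (x i θ', θ')) θ
      ((hh i (x i θ, θ)).hasFDerivAt) (hprod i)
    exact hco
  have hDstep : ∀ i, fderiv ℝ (x (i + 1)) θ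
      = ((fderiv ℝ (h i) (x i θ, θ)).comp (ContinuousLinearMap.inl ℝ _ _)).comp
          (fderiv ℝ (x i) θ)
        + (fderiv ℝ (h i) (x i θ, θ)).comp (ContinuousLinearMap.inr ℝ _ _) := by
    intro i
    rw [(hDx i).fderiv]
    exact comp_prod_id_split _ _
  have hD0 : fderiv ℝ (x 0) θ = 0 := by
    rw [hxfun0]
    exact fderiv_const_apply _
  -- derivative of X
  have hXfun : X = fun θ' (j : Fin n) => x (j.1 + 1) θ' :=
    funext fun θ' => funext fun j => hX θ' j
  have hXD : HasFDerivAt X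
      (ContinuousLinearMap.pi fun j : Fin n => fderiv ℝ (x (j.1 + 1)) θ) θ := by
    rw [hXfun]
    exact hasFDerivAt_pi.2 fun j => (hxd (j.1 + 1) θ).hasFDerivAt
  have hfX : HasFDerivAt (fun θ' => f (X θ'))
      ((fderiv ℝ f (X θ)).comp
        (ContinuousLinearMap.pi fun j : Fin n => fderiv ℝ (x (j.1 + 1)) θ)) θ :=
    ((hf (X θ)).hasFDerivAt).comp θ hXD
  -- partial derivatives of f
  have hc : ∀ j : Fin n,
      fderiv ℝ (fun v => f (Function.update (X θ) j v)) (X θ j)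
        = (fderiv ℝ f (X θ)).comp
            (ContinuousLinearMap.pi (Pi.single j (ContinuousLinearMap.id ℝ _))) := by
    intro j
    have hu := hasFDerivAt_update (𝕜 := ℝ) (X θ) (X θ j)
    have hcomp := ((hf (Function.update (X θ) j (X θ j))).hasFDerivAt).comp (X θ j) hu
    rw [Function.update_eq_self] at hcomp
    exact hcomp.fderiv
  have hsingle : ∀ (j : Fin n) (v : EuclideanSpace ℝ (Fin (k (j.1 + 1)))),
      (ContinuousLinearMap.pi (Pi.single j (ContinuousLinearMap.id ℝ _))) v
        = Pi.single (M := fun i : Fin n => EuclideanSpace ℝ (Fin (k (i.1 + 1)))) j v := by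
    intro j v
    ext i
    rcases eq_or_ne i j with rfl | hij
    · simp
    · simp [Pi.single_eq_of_ne hij]
  have hFdecomp : (fderiv ℝ f (X θ)).comp
        (ContinuousLinearMap.pi fun j : Fin n => fderiv ℝ (x (j.1 + 1)) θ)
      = ∑ j : Fin n, (fderiv ℝ (fun v => f (Function.update (X θ) j v)) (X θ j)).comp
          (fderiv ℝ (x (j.1 + 1)) θ) := by
    ext w
    simp only [hc, ContinuousLinearMap.comp_apply, ContinuousLinearMap.sum_apply,
      ContinuousLinearMap.pi_apply, hsingle]
    rw [← map_sum]
    congr 1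
    exact (Finset.univ_sum_single _).symm
  -- derivative of the log-likelihood sum
  have hlq : ∀ i, Differentiable ℝ (fun v => Real.log (q i v)) :=
    fun i => (hq i).log fun v => (hq_pos i v).ne'
  have hSd : HasFDerivAt (fun θ' => ∑ j : Fin n, Real.log (q j.1 (x j.1 θ', θ')))
      (∑ j : Fin n, (fderiv ℝ (fun v => Real.log (q j.1 v)) (x j.1 θ, θ)).comp
        ((fderiv ℝ (x j.1) θ).prod (ContinuousLinearMap.id ℝ _))) θ :=
    HasFDerivAt.fun_sum fun (j : Fin n) _ =>
      HasFDerivAt.comp (f := fun θ' => (x j.1 θ', θ')) θ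
        ((hlq j.1 (x j.1 θ, θ)).hasFDerivAt) (hprod j.1)
  have hLexp : L = fun θ' => Real.exp (∑ j : Fin n, Real.log (q j.1 (x j.1 θ', θ'))) := by
    funext θ'
    rw [hL θ', Real.exp_sum]
    exact Finset.prod_congr rfl fun j _ => (Real.exp_log (hq_pos _ _)).symm
  have hLd : HasFDerivAt L
      (L θ • ∑ j : Fin n, (fderiv ℝ (fun v => Real.log (q j.1 v)) (x j.1 θ, θ)).comp
        ((fderiv ℝ (x j.1) θ).prod (ContinuousLinearMap.id ℝ _))) θ := by
    rw [hLexp]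
    exact hSd.exp
  have hmul := hfX.mul hLd
  -- telescoping identity
  have htopT : lam (n - 1) θ = (if hi : n - 1 < n then
      fderiv ℝ (fun v => f (Function.update (X θ) ⟨n - 1, hi⟩ v)) (X θ ⟨n - 1, hi⟩)
      else 0) := by
    rw [dif_pos (show n - 1 < n by omega)]
    exact hlam_top θ
  have hrecT : ∀ j, j + 1 < n → lam j θ = (if hi : j < n then
      fderiv ℝ (fun v => f (Function.update (X θ) ⟨j, hi⟩ v)) (X θ ⟨j, hi⟩) else 0)
      + (lam (j + 1) θ).comp
          ((fderiv ℝ (h (j + 1)) (x (j + 1) θ, θ)).comp (ContinuousLinearMap.inl ℝ _ _))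
      + f (X θ) • ((fderiv ℝ (fun v => Real.log (q (j + 1) v)) (x (j + 1) θ, θ)).comp
          (ContinuousLinearMap.inl ℝ _ _)) := by
    intro j hj
    rw [dif_pos (show j < n by omega)]
    exact hlam_rec θ j hj
  have hTel := adjoint_telescope (W := EuclideanSpace ℝ (Fin m))
    (E := fun i => EuclideanSpace ℝ (Fin (k i))) n hn
    (fun i => fderiv ℝ (x i) θ)
    (fun i => (fderiv ℝ (h i) (x i θ, θ)).comp (ContinuousLinearMap.inl ℝ _ _))
    (fun i => (fderiv ℝ (h i) (x i θ, θ)).comp (ContinuousLinearMap.inr ℝ _ _))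
    (fun i => if hi : i < n then
        fderiv ℝ (fun v => f (Function.update (X θ) ⟨i, hi⟩ v)) (X θ ⟨i, hi⟩) else 0)
    (fun i => lam i θ)
    (fun i => f (X θ) • ((fderiv ℝ (fun v => Real.log (q i v)) (x i θ, θ)).comp
        (ContinuousLinearMap.inl ℝ _ _)))
    hD0 hDstep htopT hrecT
  -- final assembly
  have hkey : L θ • ghat θ
      = f (X θ) • (L θ • ∑ j : Fin n,
          (fderiv ℝ (fun v => Real.log (q j.1 v)) (x j.1 θ, θ)).comp
            ((fderiv ℝ (x j.1) θ).prod (ContinuousLinearMap.id ℝ _)))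
        + L θ • ((fderiv ℝ f (X θ)).comp
            (ContinuousLinearMap.pi fun j : Fin n => fderiv ℝ (x (j.1 + 1)) θ)) := by
    rw [smul_comm (f (X θ)) (L θ), ← smul_add]
    congr 1
    rw [hghat θ, hFdecomp]
    simp only [comp_prod_id_split, Finset.smul_sum, smul_add]
    rw [Finset.sum_add_distrib, Finset.sum_add_distrib]
    have hrange1 : ∑ j : Fin n, (lam j.1 θ).comp
          ((fderiv ℝ (h j.1) (x j.1 θ, θ)).comp (ContinuousLinearMap.inr ℝ _ _))
        = ∑ i ∈ Finset.range n, (lam i θ).comp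
          ((fderiv ℝ (h i) (x i θ, θ)).comp (ContinuousLinearMap.inr ℝ _ _)) :=
      Fin.sum_univ_eq_sum_range (fun i => (lam i θ).comp
        ((fderiv ℝ (h i) (x i θ, θ)).comp (ContinuousLinearMap.inr ℝ _ _))) n
    have hrange2 : ∑ j : Fin n, f (X θ) •
          ((fderiv ℝ (fun v => Real.log (q j.1 v)) (x j.1 θ, θ)).comp
            (ContinuousLinearMap.inl ℝ _ _)).comp (fderiv ℝ (x j.1) θ)
        = ∑ i ∈ Finset.range n, f (X θ) •
          ((fderiv ℝ (fun v => Real.log (q i v)) (x i θ, θ)).comp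
            (ContinuousLinearMap.inl ℝ _ _)).comp (fderiv ℝ (x i) θ) :=
      Fin.sum_univ_eq_sum_range (fun i => f (X θ) •
        ((fderiv ℝ (fun v => Real.log (q i v)) (x i θ, θ)).comp
          (ContinuousLinearMap.inl ℝ _ _)).comp (fderiv ℝ (x i) θ)) n
    have hrange3 : ∑ j : Fin n,
          (fderiv ℝ (fun v => f (Function.update (X θ) j v)) (X θ j)).comp
            (fderiv ℝ (x (j.1 + 1)) θ)
        = ∑ i ∈ Finset.range n, (if hi : i < n then
            fderiv ℝ (fun v => f (Function.update (X θ) ⟨i, hi⟩ v)) (X θ ⟨i, hi⟩)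
            else 0).comp (fderiv ℝ (x (i + 1)) θ) := by
      rw [← Fin.sum_univ_eq_sum_range
        (fun i => (if hi : i < n then
            fderiv ℝ (fun v => f (Function.update (X θ) ⟨i, hi⟩ v)) (X θ ⟨i, hi⟩)
            else 0).comp (fderiv ℝ (x (i + 1)) θ)) n]
      exact Finset.sum_congr rfl fun j _ => by rw [dif_pos j.2]
    rw [hrange1, hrange2, hrange3, hTel]
    simp only [ContinuousLinearMap.smul_comp]
    abel
  rw [hkey]
  exact hmul
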